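/- Let S be a semigroup and a, b ∈ S group elements. If a ∼ b then a D b (a and b are Green's D-related). -/
import Mathlib


variable {S : Type*} [Semigroup S]

/-- Primary conjugacy: `a = x*y` and `b = y*x` for some `x, y`. -/
def PConj (a b : S) : Prop := ∃ x y : S, a = x * y ∧ b = y * x

/-- Conjugacy: the transitive closure of primary conjugacy. -/
def SConj : S → S → Prop := Relation.TransGen PConj

/-- `pw a n` is `a ^ n` for `n ≥ 1` (with junk value `a` at `n = 0`). -/
def pw (a : S) : ℕ → S
  | 0 => a
  | 1 => a
  | n + 2 => pw a (n + 1) * a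

/-- An element is a group element iff it lies in some subgroup of `S`:
there is an idempotent `e` acting as identity on `a`, and an inverse of `a`
relative to `e`. -/
def IsGroupElement (a : S) : Prop :=
  ∃ e b : S, e * e = e ∧ e * a = a ∧ a * e = a ∧ a * b = e ∧ b * a = e

/-- An element is group-bound if some positive power is a group element. -/
def GroupBound (a : S) : Prop := ∃ n : ℕ, 1 ≤ n ∧ IsGroupElement (pw a n)

/-- Green's L-relation: same principal left ideal in `S¹`. -/
def LRel (a b : S) : Prop :=
  (∃ u : WithOne S, u * (a : WithOne S) = (b : WithOne S)) ∧
  (∃ u : WithOne S, u * (b : WithOne S) = (a : WithOne S))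

/-- Green's R-relation: same principal right ideal in `S¹`. -/
def RRel (a b : S) : Prop :=
  (∃ u : WithOne S, (a : WithOne S) * u = (b : WithOne S)) ∧
  (∃ u : WithOne S, (b : WithOne S) * u = (a : WithOne S))

/-- Green's H-relation. -/
def HRel (a b : S) : Prop := LRel a b ∧ RRel a b

/-- Green's D-relation. -/
def DRel (a b : S) : Prop := ∃ c : S, LRel a c ∧ RRel c b

section MonoidLemmas

variable {M : Type*} [Monoid M]

lemma myconj_pow (x y : M) : ∀ n : ℕ, (x*y)^(n+1) = x * (y*x)^n * y
  | 0 => by simp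
  | n+1 => by
    rw [pow_succ' (x*y) (n+1), myconj_pow x y n, pow_succ' (y*x) n]
    simp [mul_assoc]

lemma absorb_left {E A : M} (hE : E * A = A) (k : ℕ) : E * A^(k+1) = A^(k+1) := by
  rw [pow_succ' A k, ← mul_assoc, hE]

lemma pow_cancelE {A A' E : M} (h : A' * A = E) (hE : E * A = A) :
    ∀ m : ℕ, A'^(m+1) * A^(m+1) = E
  | 0 => by simpa using h
  | m+1 => by
    have h1 : A'^(m+2) * A^(m+2) = A'^(m+1) * ((A' * A) * A^(m+1)) := by
      rw [pow_succ A' (m+1), pow_succ' A (m+1)]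
      simp [mul_assoc]
    rw [h1, h, absorb_left hE m, pow_cancelE h hE m]

end MonoidLemmas

lemma exists_coe_pow (a : S) : ∀ m : ℕ, ∃ z : S, (z : WithOne S) = (a : WithOne S)^(m+1)
  | 0 => ⟨a, (pow_one _).symm⟩
  | m+1 => by
    obtain ⟨z, hz⟩ := exists_coe_pow a m
    exact ⟨z*a, by rw [pow_succ, ← hz]; push_cast; rfl⟩

lemma sconj_chain {a b : S} (h : SConj a b) :
    ∃ (X Y : S) (m : ℕ), ∀ k : ℕ,
      ((a : WithOne S))^(m+k+2) = ↑X * ((b : WithOne S))^(k+1) * ↑Y ∧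
      ((b : WithOne S))^(m+k+2) = ↑Y * ((a : WithOne S))^(k+1) * ↑X := by
  induction h with
  | single hp =>
    rename_i bb
    obtain ⟨x, y, hxy, hyx⟩ := hp
    have hha : ((a : WithOne S)) = ↑x * ↑y := by rw [hxy]; push_cast; rfl
    have hhb : ((bb : WithOne S)) = ↑y * ↑x := by rw [hyx]; push_cast; rfl
    exact ⟨x, y, 0, fun k => ⟨by rw [hha, hhb, myconj_pow]; norm_num, by rw [hha, hhb, myconj_pow]; norm_num⟩⟩
  | tail hab hp ih =>
    rename_i bb c
    obtain ⟨x, y, hxy, hyx⟩ := hp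
    obtain ⟨X, Y, m, hXY⟩ := ih
    have hbb : ((bb : WithOne S)) = ↑x * ↑y := by rw [hxy]; push_cast; rfl
    have hcc : ((c : WithOne S)) = ↑y * ↑x := by rw [hyx]; push_cast; rfl
    refine ⟨X * x, y * Y, m+1, fun k => ⟨?_, ?_⟩⟩
    · have h1 : ((a : WithOne S))^(m+(k+1)+2) = ↑X * ((bb : WithOne S))^(k+2) * ↑Y :=
        (hXY (k+1)).1
      have h2 : ((bb : WithOne S))^(k+2) = ↑x * ((c : WithOne S))^(k+1) * ↑y := by
        rw [hbb, hcc, myconj_pow]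
      have hgoal : m+1+k+2 = m+(k+1)+2 := by omega
      rw [hgoal, h1, h2]
      push_cast
      simp [mul_assoc]
    · have h1 : ((bb : WithOne S))^(m+k+2) = ↑Y * ((a : WithOne S))^(k+1) * ↑X :=
        (hXY k).2
      have h2 : ((c : WithOne S))^(m+k+3) = ↑y * ((bb : WithOne S))^(m+k+2) * ↑x := by
        rw [hbb, hcc, myconj_pow]
      have hgoal : m+1+k+2 = m+k+3 := by omega
      rw [hgoal, h2, h1]
      push_cast
      simp [mul_assoc]

theorem dRel_of_sconj_group_elements (a b : S)
    (ha : IsGroupElement a) (hb : IsGroupElement b) (h : SConj a b) :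
    DRel a b := by
  obtain ⟨e, a1, hee, hea, hae, haa1, ha1a⟩ := ha
  obtain ⟨f, b1, hff, hfb, hbf, hbb1, hb1b⟩ := hb
  obtain ⟨X, Y, m, hXY⟩ := sconj_chain h
  -- normalized inverses
  set a2 := e * a1 * e with ha2def
  set b2 := f * b1 * f with hb2def
  -- S-level facts
  have hA2A : a2 * a = e := by
    rw [ha2def]
    calc e * a1 * e * a = e * a1 * (e * a) := by rw [mul_assoc]
    _ = e * (a1 * a) := by rw [hea, mul_assoc]
    _ = e * e := by rw [ha1a]
    _ = e := hee
  have hBB2 : b * b2 = f := by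
    rw [hb2def]
    calc b * (f * b1 * f) = (b * f) * (b1 * f) := by simp [mul_assoc]
    _ = b * (b1 * f) := by rw [hbf]
    _ = (b * b1) * f := by rw [mul_assoc]
    _ = f := by rw [hbb1, hff]
  have hFB2 : f * b2 = b2 := by
    rw [hb2def]
    calc f * (f * b1 * f) = (f * f) * (b1 * f) := by simp [mul_assoc]
    _ = f * (b1 * f) := by rw [hff]
    _ = f * b1 * f := by rw [mul_assoc]
  -- lift to WithOne S
  have HEA : (e : WithOne S) * a = (a : WithOne S) := by rw [← WithOne.coe_mul, hea]
  have HBF : (b : WithOne S) * f = (b : WithOne S) := by rw [← WithOne.coe_mul, hbf]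
  have HFB : (f : WithOne S) * b = (b : WithOne S) := by rw [← WithOne.coe_mul, hfb]
  have HA2A : (a2 : WithOne S) * a = (e : WithOne S) := by rw [← WithOne.coe_mul, hA2A]
  have HBB2 : (b : WithOne S) * b2 = (f : WithOne S) := by rw [← WithOne.coe_mul, hBB2]
  have HFB2 : (f : WithOne S) * b2 = (b2 : WithOne S) := by rw [← WithOne.coe_mul, hFB2]
  -- power facts
  have powE : ((a2 : WithOne S))^(m+m+2) * ((a : WithOne S))^(m+m+2) = (e : WithOne S) :=
    pow_cancelE HA2A HEA (m+m+1)
  have powF : ((b : WithOne S))^(m+m+2) * ((b2 : WithOne S))^(m+m+2) = (f : WithOne S) :=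
    pow_cancelE HBB2 HFB2 (m+m+1)
  have absF : (f : WithOne S) * ((b : WithOne S))^(m+m+2) = ((b : WithOne S))^(m+m+2) :=
    absorb_left HFB (m+m+1)
  -- key chain identities
  have key1 : ((a : WithOne S))^(m+2) = ↑X * (b : WithOne S) * ↑Y := by
    have := (hXY 0).1; simpa using this
  have key2 : ((b : WithOne S))^(m+m+2) = ↑Y * ((a : WithOne S))^(m+1) * ↑X := by
    have := (hXY m).2; simpa using this
  obtain ⟨z, hz⟩ := exists_coe_pow a m
  refine ⟨f * (Y * z), ⟨?_, ?_⟩, ⟨?_, ?_⟩⟩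
  -- LRel a c, forward: u * a = c
  · exact ⟨↑f * (↑Y * ((a : WithOne S))^m), by push_cast; rw [hz, pow_succ]; simp [mul_assoc]⟩
  -- LRel a c, backward: u * c = a
  · refine ⟨((a2 : WithOne S))^(m+m+2) * (↑X * ↑b), ?_⟩
    have hc : ((f * (Y * z) : S) : WithOne S)
        = ↑f * (↑Y * ((a : WithOne S))^(m+1)) := by push_cast; rw [hz]
    rw [hc]
    have step1 : (↑X * (b : WithOne S)) * (↑f * (↑Y * ((a : WithOne S))^(m+1)))
        = (↑X * (b : WithOne S) * ↑Y) * ((a : WithOne S))^(m+1) := by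
      calc (↑X * (b : WithOne S)) * (↑f * (↑Y * ((a : WithOne S))^(m+1)))
          = ↑X * (((b : WithOne S) * ↑f) * (↑Y * ((a : WithOne S))^(m+1))) := by
            simp [mul_assoc]
      _ = ↑X * ((b : WithOne S) * (↑Y * ((a : WithOne S))^(m+1))) := by rw [HBF]
      _ = (↑X * (b : WithOne S) * ↑Y) * ((a : WithOne S))^(m+1) := by simp [mul_assoc]
    calc ((a2 : WithOne S))^(m+m+2) * (↑X * ↑b) * (↑f * (↑Y * ((a : WithOne S))^(m+1)))
        = ((a2 : WithOne S))^(m+m+2) * ((↑X * ↑b) * (↑f * (↑Y * ((a : WithOne S))^(m+1)))) := by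
          rw [mul_assoc]
    _ = ((a2 : WithOne S))^(m+m+2) * (((a : WithOne S))^(m+2) * ((a : WithOne S))^(m+1)) := by
          rw [step1, ← key1]
    _ = ((a2 : WithOne S))^(m+m+2) * (((a : WithOne S))^(m+m+2) * (a : WithOne S)) := by
          rw [← pow_add, ← pow_succ]
          congr 2
          omega
    _ = ((a2 : WithOne S))^(m+m+2) * ((a : WithOne S))^(m+m+2) * (a : WithOne S) := by
          rw [mul_assoc]
    _ = (a : WithOne S) := by rw [powE, HEA]
  -- RRel c b, forward: c * u = b
  · refine ⟨↑X * (((b2 : WithOne S))^(m+m+2) * ↑b), ?_⟩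
    have hc : ((f * (Y * z) : S) : WithOne S)
        = ↑f * (↑Y * ((a : WithOne S))^(m+1)) := by push_cast; rw [hz]
    rw [hc]
    calc ↑f * (↑Y * ((a : WithOne S))^(m+1)) * (↑X * (((b2 : WithOne S))^(m+m+2) * ↑b))
        = ↑f * ((↑Y * ((a : WithOne S))^(m+1) * ↑X) * (((b2 : WithOne S))^(m+m+2) * ↑b)) := by
          simp [mul_assoc]
    _ = ↑f * (((b : WithOne S))^(m+m+2) * (((b2 : WithOne S))^(m+m+2) * ↑b)) := by rw [← key2]
    _ = (↑f * ((b : WithOne S))^(m+m+2)) * (((b2 : WithOne S))^(m+m+2) * ↑b) := by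
          simp [mul_assoc]
    _ = ((b : WithOne S))^(m+m+2) * (((b2 : WithOne S))^(m+m+2) * ↑b) := by rw [absF]
    _ = (((b : WithOne S))^(m+m+2) * ((b2 : WithOne S))^(m+m+2)) * ↑b := by rw [mul_assoc]
    _ = (b : WithOne S) := by rw [powF, HFB]
  -- RRel c b, backward: b * u = c
  · refine ⟨↑b2 * (↑Y * ↑z), ?_⟩
    have hc : ((f * (Y * z) : S) : WithOne S) = ↑f * (↑Y * ↑z) := by push_cast; rfl
    rw [hc, ← mul_assoc, HBB2]
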